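/- The number of paths of n steps in the alphabet {U, D}, where U = (1,1) and D = (1,-1), that start at (0,0) and never pass below the x-axis (not necessarily ending on the x-axis) is binomial(n, ⌈n/2⌉). -/

import Mathlib

open Finset

def G (n k : ℕ) : Finset (Finset ℕ) :=
  (Finset.Icc 1 n).powerset.filter
    (fun B => B.card = k ∧ ∀ p ≤ n, p ≤ 2 * (B.filter (· ≤ p)).card)

lemma mem_G {n k : ℕ} {B : Finset ℕ} :
    B ∈ G n k ↔ B ⊆ Finset.Icc 1 n ∧ B.card = k ∧
      ∀ p ≤ n, p ≤ 2 * (B.filter (· ≤ p)).card := by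
  simp [G, and_assoc]

lemma G_zero {n k : ℕ} (h : 2 * k < n) : G n k = ∅ := by
  ext B
  simp only [mem_G, Finset.notMem_empty, iff_false]
  rintro ⟨hsub, hcard, hgood⟩
  have := hgood n le_rfl
  have h2 : (B.filter (· ≤ n)).card ≤ B.card := Finset.card_filter_le _ _
  omega

lemma G_notmem {n k : ℕ} (h : n + 1 ≤ 2 * (k+1)) :
    (G (n+1) (k+1)).filter (fun B => n + 1 ∉ B) = G n (k+1) := by
  ext B
  simp only [Finset.mem_filter, mem_G]
  constructor
  · rintro ⟨⟨hsub, hcard, hgood⟩, hnot⟩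
    refine ⟨fun x hx => ?_, hcard, fun p hp => hgood p (by omega)⟩
    have := hsub hx
    simp only [Finset.mem_Icc] at this ⊢
    have : x ≠ n + 1 := fun hx' => hnot (hx' ▸ hx)
    omega
  · rintro ⟨hsub, hcard, hgood⟩
    have hnot : n + 1 ∉ B := fun hx => by
      have := Finset.mem_Icc.mp (hsub hx); omega
    refine ⟨⟨fun x hx => ?_, hcard, fun p hp => ?_⟩, hnot⟩
    · have := hsub hx; simp only [Finset.mem_Icc] at this ⊢; omega
    · rcases Nat.lt_or_ge p (n+1) with h' | h'
      · exact hgood p (by omega)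
      · have hp' : p = n + 1 := by omega
        subst hp'
        have : B.filter (· ≤ n + 1) = B := by
          apply Finset.filter_true_of_mem
          intro x hx
          have := hsub hx; simp only [Finset.mem_Icc] at this
          omega
        rw [this, hcard]
        omega

lemma G_mem {n k : ℕ} :
    ((G (n+1) (k+1)).filter (fun B => n + 1 ∈ B)).card = (G n k).card := by
  apply Finset.card_bij (fun B _ => B.erase (n+1))
  · rintro B hB
    simp only [Finset.mem_filter, mem_G] at hB
    obtain ⟨⟨hsub, hcard, hgood⟩, hmem⟩ := hB
    rw [mem_G]
    refine ⟨fun x hx => ?_, ?_, fun p hp => ?_⟩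
    · rw [Finset.mem_erase] at hx
      have := hsub hx.2
      simp only [Finset.mem_Icc] at this ⊢
      have := hx.1
      omega
    · rw [Finset.card_erase_of_mem hmem, hcard]; omega
    · have hfe : (B.erase (n+1)).filter (· ≤ p) = B.filter (· ≤ p) := by
        ext x
        simp only [Finset.mem_filter, Finset.mem_erase]
        constructor
        · rintro ⟨⟨_, h1⟩, h2⟩; exact ⟨h1, h2⟩
        · rintro ⟨h1, h2⟩; exact ⟨⟨by omega, h1⟩, h2⟩
      rw [hfe]
      exact hgood p (by omega)
  · rintro B hB B' hB' h
    simp only [Finset.mem_filter] at hB hB'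
    have : insert (n+1) (B.erase (n+1)) = insert (n+1) (B'.erase (n+1)) := by rw [h]
    rwa [Finset.insert_erase hB.2, Finset.insert_erase hB'.2] at this
  · rintro B' hB'
    rw [mem_G] at hB'
    obtain ⟨hsub, hcard, hgood⟩ := hB'
    have hnot : n + 1 ∉ B' := fun hx => by
      have := Finset.mem_Icc.mp (hsub hx); omega
    refine ⟨insert (n+1) B', ?_, ?_⟩
    · simp only [Finset.mem_filter, mem_G]
      refine ⟨⟨fun x hx => ?_, ?_, fun p hp => ?_⟩, Finset.mem_insert_self _ _⟩
      · rw [Finset.mem_insert] at hx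
        rcases hx with hx | hx
        · simp [Finset.mem_Icc]; omega
        · have := hsub hx; simp only [Finset.mem_Icc] at this ⊢; omega
      · rw [Finset.card_insert_of_notMem hnot, hcard]
      · rcases Nat.lt_or_ge p (n+1) with h' | h'
        · have hfe : (insert (n+1) B').filter (· ≤ p) = B'.filter (· ≤ p) := by
            ext x
            simp only [Finset.mem_filter, Finset.mem_insert]
            constructor
            · rintro ⟨h1 | h1, h2⟩
              · omega
              · exact ⟨h1, h2⟩
            · rintro ⟨h1, h2⟩; exact ⟨Or.inr h1, h2⟩
          rw [hfe]
          exact hgood p (by omega)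
        · have hp' : p = n + 1 := by omega
          subst hp'
          have hfe : (insert (n+1) B').filter (· ≤ n+1) = insert (n+1) B' := by
            apply Finset.filter_true_of_mem
            intro x hx
            rw [Finset.mem_insert] at hx
            rcases hx with hx | hx
            · omega
            · have := hsub hx; simp only [Finset.mem_Icc] at this; omega
          rw [hfe, Finset.card_insert_of_notMem hnot, hcard]
          have := hgood n le_rfl
          have h2 : (B'.filter (· ≤ n)).card ≤ B'.card := Finset.card_filter_le _ _
          omega
    · exact Finset.erase_insert hnot

lemma G_rec {n k : ℕ} (h : n + 1 ≤ 2 * (k+1)) :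
    (G (n+1) (k+1)).card = (G n (k+1)).card + (G n k).card := by
  rw [← Finset.card_filter_add_card_filter_not (s := G (n+1) (k+1))
      (p := fun B => n + 1 ∈ B), G_mem]
  have h1 : Finset.filter (fun a => ¬ n+1 ∈ a) (G (n+1) (k+1)) = G n (k+1) := G_notmem h
  rw [h1]
  ring

lemma G_closed : ∀ n k : ℕ, n ≤ 2 * k →
    (G n k).card + Nat.choose n (k+1) = Nat.choose n k := by
  intro n
  induction n with
  | zero =>
    intro k _
    have h0 : (Finset.Icc 1 0 : Finset ℕ) = ∅ := by simp
    have : G 0 k = Finset.filter (fun B => B.card = k ∧ ∀ p ≤ 0, p ≤ 2 * (B.filter (· ≤ p)).card) {∅} := by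
      rw [G, h0, Finset.powerset_empty]
    rw [this]
    rcases Nat.eq_zero_or_pos k with hk | hk
    · subst hk
      rw [Finset.filter_singleton]
      simp
    · rw [Finset.filter_singleton]
      have : ¬ ((∅ : Finset ℕ).card = k ∧ ∀ p ≤ 0, p ≤ 2 * ((∅ : Finset ℕ).filter (· ≤ p)).card) := by
        simp; omega
      rw [if_neg this]
      simp [Nat.choose_eq_zero_of_lt, hk]
  | succ n ih =>
    intro k hk
    have hk1 : 1 ≤ k := by omega
    obtain ⟨j, rfl⟩ : ∃ j, k = j + 1 := ⟨k - 1, by omega⟩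
    rw [G_rec hk]
    rcases Nat.lt_or_ge n (2 * j + 1) with hn | hn
    · -- n ≤ 2j
      have h1 := ih j (by omega)
      have h2 := ih (j+1) (by omega)
      have p1 : Nat.choose (n+1) (j+1) = Nat.choose n j + Nat.choose n (j+1) :=
        Nat.choose_succ_succ n j
      have p2 : Nat.choose (n+1) (j+1+1) = Nat.choose n (j+1) + Nat.choose n (j+1+1) :=
        Nat.choose_succ_succ n (j+1)
      omega
    · -- 2j < n ≤ 2(j+1)-1 so n = 2j+1
      have hn' : n = 2 * j + 1 := by omega
      have h0 : (G n j).card = 0 := by rw [G_zero (by omega)]; rfl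
      have h2 := ih (j+1) (by omega)
      have p1 : Nat.choose (n+1) (j+1) = Nat.choose n j + Nat.choose n (j+1) :=
        Nat.choose_succ_succ n j
      have p2 : Nat.choose (n+1) (j+1+1) = Nat.choose n (j+1) + Nat.choose n (j+1+1) :=
        Nat.choose_succ_succ n (j+1)
      have sym : Nat.choose n j = Nat.choose n (j+1) := by
        subst hn'
        exact (Nat.choose_symm_half j).symm
      omega

lemma G_tele (n : ℕ) : ∀ d j, n + 1 ≤ j + d → n ≤ 2 * j →
    (∑ k ∈ Finset.Ico j (n+1), (G n k).card) = Nat.choose n j := by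
  intro d
  induction d with
  | zero =>
    intro j h1 _
    rw [Finset.Ico_eq_empty (by omega), Finset.sum_empty,
      Nat.choose_eq_zero_of_lt (by omega)]
  | succ d ih =>
    intro j h1 h2
    rcases Nat.lt_or_ge j (n+1) with hj | hj
    · rw [← Finset.insert_Ico_add_one_left_eq_Ico hj, Finset.sum_insert (by simp)]
      rw [ih (j+1) (by omega) (by omega)]
      exact G_closed n j h2
    · rw [Finset.Ico_eq_empty (by omega), Finset.sum_empty,
        Nat.choose_eq_zero_of_lt (by omega)]

lemma S_card (n : ℕ) :
    ((Finset.Icc 1 n).powerset.filter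
      (fun B => ∀ p ≤ n, p ≤ 2 * (B.filter (· ≤ p)).card)).card
      = ∑ k ∈ Finset.range (n+1), (G n k).card := by
  apply Finset.card_eq_sum_card_fiberwise (f := Finset.card)
    (t := Finset.range (n+1)) ?_ |>.trans ?_
  · intro B hB
    simp only [Finset.mem_coe, Finset.mem_filter, Finset.mem_powerset] at hB
    have := Finset.card_le_card hB.1
    rw [Nat.card_Icc] at this
    simp only [Finset.mem_coe, Finset.mem_range]
    omega
  · apply Finset.sum_congr rfl
    intro k _
    congr 1
    ext B
    simp only [Finset.mem_filter, Finset.mem_powerset, mem_G]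
    tauto


/-- **Nonnegative U/D paths.** A path of `n` steps in `{U, D}` starting at `(0,0)` is
encoded by the set `B ⊆ [1, n]` of positions of its Up steps.  After `p` steps its
height is `2 * (B.filter (· ≤ p)).card - p`; never passing below the x-axis means
`p ≤ 2 * (B.filter (· ≤ p)).card` for all `p ≤ n`.  The number of such paths is
`n choose ⌈n/2⌉`. -/
theorem stmt2 (n : ℕ) :
    Nat.card {B : Finset ℕ // B ⊆ Finset.Icc 1 n ∧
        ∀ p ≤ n, p ≤ 2 * (B.filter (· ≤ p)).card}
      = Nat.choose n ((n + 1) / 2) := by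
  have e : {B : Finset ℕ // B ⊆ Finset.Icc 1 n ∧
        ∀ p ≤ n, p ≤ 2 * (B.filter (· ≤ p)).card}
      ≃ {B // B ∈ (Finset.Icc 1 n).powerset.filter
        (fun B => ∀ p ≤ n, p ≤ 2 * (B.filter (· ≤ p)).card)} :=
    Equiv.subtypeEquivRight (fun B => by
      simp only [Finset.mem_filter, Finset.mem_powerset])
  rw [Nat.card_congr e, Nat.card_eq_finsetCard, S_card]
  set m := (n+1)/2 with hm
  have hsplit : (∑ k ∈ Finset.Ico 0 m, (G n k).card)
      + (∑ k ∈ Finset.Ico m (n+1), (G n k).card)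
      = ∑ k ∈ Finset.Ico 0 (n+1), (G n k).card :=
    Finset.sum_Ico_consecutive _ (by omega) (by omega)
  have hz : (∑ k ∈ Finset.Ico 0 m, (G n k).card) = 0 := by
    apply Finset.sum_eq_zero
    intro k hk
    simp only [Finset.mem_Ico] at hk
    rw [G_zero (by omega)]
    rfl
  have ht : (∑ k ∈ Finset.Ico m (n+1), (G n k).card) = Nat.choose n m :=
    G_tele n (n + 1) m (by omega) (by omega)
  rw [Finset.range_eq_Ico, ← hsplit, hz, ht]
  omega
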